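/- Let A ∈ 𝒳 have rows a_1,…,a_ℓ. (i) For every transposition τ ∈ Π swapping rows p and q, one has ‖A − τ·A‖ = √2 · ‖a_p − a_q‖, where ‖a_p − a_q‖ is the Euclidean norm on ℝ^m. (ii) For every σ ∈ Π with σ ≠ id there exists a transposition τ ∈ Π such that ‖A − τ·A‖ ≤ ‖A − σ·A‖; consequently the minimum of ‖A − σ·A‖ over σ ∈ Π \ {id} is attained at a transposition. -/

import Mathlib

open scoped BigOperators
open MeasureTheory

noncomputable section

/-- Matrices as points of the Euclidean space `ℝ^{ℓ×m}` with the Frobenius norm. -/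
abbrev Mat (l m : ℕ) := EuclideanSpace ℝ (Fin l × Fin m)

/-- `A` is a representation matrix: entries in `[0,1]` and each column sums to `1`. -/
def IsRep {l m : ℕ} (A : Mat l m) : Prop :=
  (∀ p, 0 ≤ A p ∧ A p ≤ 1) ∧ ∀ j : Fin m, ∑ k : Fin l, A (k, j) = 1

/-- The representation space `𝒳`. -/
abbrev RepSpace (l m : ℕ) := {A : Mat l m // IsRep A}

/-- Action of a permutation on a matrix by permuting rows. -/
def permAct {l m : ℕ} (σ : Equiv.Perm (Fin l)) (A : Mat l m) : Mat l m :=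
  WithLp.toLp 2 (fun p : Fin l × Fin m => A (σ⁻¹ p.1, p.2))

lemma isRep_permAct {l m : ℕ} (σ : Equiv.Perm (Fin l)) {A : Mat l m} (hA : IsRep A) :
    IsRep (permAct σ A) := by
  refine ⟨fun p => hA.1 _, fun j => ?_⟩
  have h := Equiv.sum_comp σ⁻¹ (fun k => A (k, j))
  simpa [permAct] using h.trans (hA.2 j)

instance {l m : ℕ} : SMul (Equiv.Perm (Fin l)) (RepSpace l m) :=
  ⟨fun σ A => ⟨permAct σ A.1, isRep_permAct σ A.2⟩⟩

lemma smul_rep_def {l m : ℕ} (σ : Equiv.Perm (Fin l)) (A : RepSpace l m) :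
    (σ • A).1 = permAct σ A.1 := rfl

instance {l m : ℕ} : MulAction (Equiv.Perm (Fin l)) (RepSpace l m) where
  one_smul A := Subtype.ext rfl
  mul_smul σ τ A := Subtype.ext rfl

/-- Two representation matrices are equivalent iff they lie in the same `Π`-orbit. -/
instance pSetoid (l m : ℕ) : Setoid (RepSpace l m) :=
  MulAction.orbitRel (Equiv.Perm (Fin l)) (RepSpace l m)

/-- The partition space `𝒫 = 𝒳/Π`. -/
abbrev PSpace (l m : ℕ) := Quotient (pSetoid l m)

/-- The intrinsic metric `δ` on `𝒫`: the minimal Euclidean distance between representatives. -/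
def pdist {l m : ℕ} (X Y : PSpace l m) : ℝ :=
  sInf {d | ∃ A B : RepSpace l m, ⟦A⟧ = X ∧ ⟦B⟧ = Y ∧ d = dist A B}

/-- The degree of asymmetry `α` of the partition represented by `A`:
`min {‖A - σ·A‖ : σ ≠ id}`. -/
def alpha {l m : ℕ} (A : RepSpace l m) : ℝ :=
  sInf {d | ∃ σ : Equiv.Perm (Fin l), σ ≠ 1 ∧ d = dist A (σ • A)}

/-- The closed ball in the partition space. -/
def pBall {l m : ℕ} (Z : PSpace l m) (r : ℝ) : Set (PSpace l m) :=
  {X | pdist X Z ≤ r}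

/-- The metric topology on `𝒫` generated by the open balls of `δ`. -/
instance {l m : ℕ} : TopologicalSpace (PSpace l m) :=
  TopologicalSpace.generateFrom {s | ∃ (Z : PSpace l m) (r : ℝ), s = {X | pdist X Z < r}}

instance {l m : ℕ} : MeasurableSpace (PSpace l m) := borel _

/-- `B(Z, r)` is a homogeneous ball: there is a bijective isometry onto the closed ball of
radius `r` in `𝒳` centered at a representative of `Z`. -/
def IsHomBall {l m : ℕ} (Z : PSpace l m) (r : ℝ) : Prop :=
  ∃ A : RepSpace l m, ⟦A⟧ = Z ∧
    ∃ φ : pBall Z r → {B : RepSpace l m | dist B A ≤ r},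
      Function.Bijective φ ∧
        ∀ X Y : pBall Z r,
          dist (φ X : RepSpace l m) (φ Y : RepSpace l m) =
            pdist (X : PSpace l m) (Y : PSpace l m)

/-- The `k`-th row of a representation matrix, as a point of Euclidean space `ℝ^m`. -/
def rowOf {l m : ℕ} (A : RepSpace l m) (k : Fin l) : EuclideanSpace ℝ (Fin m) :=
  WithLp.toLp 2 (fun j => A.1 (k, j))

/-- The support of a measure: the smallest closed set of full measure. -/
def msupport {l m : ℕ} (Q : Measure (PSpace l m)) : Set (PSpace l m) :=
  ⋂₀ {S | IsClosed S ∧ Q S = 1}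

/-- The Dirichlet fundamental domain centered at `A`. -/
def DirDom {l m : ℕ} (A : RepSpace l m) : Set (RepSpace l m) :=
  {B | ∀ σ : Equiv.Perm (Fin l), dist B A ≤ dist B (σ • A)}

lemma row_dist_sq {l m : ℕ} (A : RepSpace l m) (p q : Fin l) :
    dist (rowOf A p) (rowOf A q) ^ 2 = ∑ j : Fin m, dist (A.1 (p, j)) (A.1 (q, j)) ^ 2 := by
  rw [EuclideanSpace.dist_eq, Real.sq_sqrt (by positivity)]
  rfl

lemma dist_sq_perm {l m : ℕ} (A : RepSpace l m) (σ : Equiv.Perm (Fin l)) :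
    dist A (σ • A) ^ 2 = ∑ k : Fin l, dist (rowOf A k) (rowOf A (σ⁻¹ k)) ^ 2 := by
  have h1 : dist A (σ • A) = Real.sqrt (∑ p : Fin l × Fin m,
      dist (A.1 p) (A.1 (σ⁻¹ p.1, p.2)) ^ 2) := by
    rw [Subtype.dist_eq, EuclideanSpace.dist_eq]
    rfl
  rw [h1, Real.sq_sqrt (by positivity), Fintype.sum_prod_type]
  refine Finset.sum_congr rfl fun k _ => ?_
  rw [row_dist_sq]

lemma dist_swap_sq {l m : ℕ} (A : RepSpace l m) {p q : Fin l} (hpq : p ≠ q) :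
    dist A (Equiv.swap p q • A) ^ 2 = 2 * dist (rowOf A p) (rowOf A q) ^ 2 := by
  rw [dist_sq_perm]
  have hs : ∀ k : Fin l, k ∉ ({p, q} : Finset (Fin l)) →
      dist (rowOf A k) (rowOf A ((Equiv.swap p q)⁻¹ k)) ^ 2 = 0 := by
    intro k hk
    simp only [Finset.mem_insert, Finset.mem_singleton, not_or] at hk
    rw [Equiv.swap_inv, Equiv.swap_apply_of_ne_of_ne hk.1 hk.2]
    simp
  rw [← Finset.sum_subset (Finset.subset_univ ({p, q} : Finset (Fin l)))
    (fun k _ hk => hs k hk), Finset.sum_pair hpq]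
  rw [Equiv.swap_inv, Equiv.swap_apply_left, Equiv.swap_apply_right, dist_comm (rowOf A q)]
  ring

theorem stmt19 {l m : ℕ} (hl : 2 ≤ l) (hm : 1 ≤ m) (A : RepSpace l m) :
    (∀ p q : Fin l, p ≠ q →
        dist A (Equiv.swap p q • A) = Real.sqrt 2 * dist (rowOf A p) (rowOf A q)) ∧
    (∀ σ : Equiv.Perm (Fin l), σ ≠ 1 →
        ∃ p q : Fin l, p ≠ q ∧ dist A (Equiv.swap p q • A) ≤ dist A (σ • A)) ∧
    (∃ p q : Fin l, p ≠ q ∧ dist A (Equiv.swap p q • A) = alpha A) := by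
  have part1 : ∀ p q : Fin l, p ≠ q →
      dist A (Equiv.swap p q • A) = Real.sqrt 2 * dist (rowOf A p) (rowOf A q) := by
    intro p q hpq
    have h := dist_swap_sq A hpq
    have h2 : dist A (Equiv.swap p q • A) =
        Real.sqrt (2 * dist (rowOf A p) (rowOf A q) ^ 2) := by
      rw [← h, Real.sqrt_sq dist_nonneg]
    rw [h2, Real.sqrt_mul (by norm_num), Real.sqrt_sq dist_nonneg]
  have part2 : ∀ σ : Equiv.Perm (Fin l), σ ≠ 1 →
      ∃ p q : Fin l, p ≠ q ∧ dist A (Equiv.swap p q • A) ≤ dist A (σ • A) := by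
    intro σ hσ
    set f : Fin l → ℝ := fun k => dist (rowOf A k) (rowOf A (σ⁻¹ k)) ^ 2 with hf
    have hS : (Finset.univ.filter (fun k : Fin l => σ⁻¹ k ≠ k)).Nonempty := by
      by_contra h
      apply hσ
      have hall : ∀ k, σ⁻¹ k = k := by
        intro k
        by_contra hc
        exact h ⟨k, Finset.mem_filter.mpr ⟨Finset.mem_univ k, hc⟩⟩
      refine Equiv.ext fun k => ?_
      have := hall (σ k)
      simpa using this.symm
    obtain ⟨p, hpmem, hpmin⟩ := Finset.exists_min_image _ f hS
    simp only [Finset.mem_filter, Finset.mem_univ, true_and] at hpmem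
    refine ⟨p, σ⁻¹ p, Ne.symm hpmem, ?_⟩
    have hq : σ⁻¹ (σ⁻¹ p) ≠ σ⁻¹ p := by
      intro hc
      exact hpmem (by simpa using congrArg σ hc)
    have hqmem : σ⁻¹ p ∈ Finset.univ.filter (fun k : Fin l => σ⁻¹ k ≠ k) :=
      Finset.mem_filter.mpr ⟨Finset.mem_univ _, hq⟩
    have hfq : f p ≤ f (σ⁻¹ p) := hpmin _ hqmem
    have hsum : 2 * f p ≤ ∑ k : Fin l, f k := by
      have h2 : f p + f (σ⁻¹ p) ≤ ∑ k : Fin l, f k := by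
        rw [← Finset.sum_pair (Ne.symm hpmem)]
        refine Finset.sum_le_sum_of_subset_of_nonneg (Finset.subset_univ _)
          (fun k _ _ => by positivity)
      linarith
    have hsq : dist A (Equiv.swap p (σ⁻¹ p) • A) ^ 2 ≤ dist A (σ • A) ^ 2 := by
      rw [dist_swap_sq A (Ne.symm hpmem), dist_sq_perm A σ]
      exact hsum
    calc dist A (Equiv.swap p (σ⁻¹ p) • A)
        = Real.sqrt (dist A (Equiv.swap p (σ⁻¹ p) • A) ^ 2) := (Real.sqrt_sq dist_nonneg).symm
      _ ≤ Real.sqrt (dist A (σ • A) ^ 2) := Real.sqrt_le_sqrt hsq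
      _ = dist A (σ • A) := Real.sqrt_sq dist_nonneg
  refine ⟨part1, part2, ?_⟩
  -- part 3
  set S : Set ℝ := {d | ∃ σ : Equiv.Perm (Fin l), σ ≠ 1 ∧ d = dist A (σ • A)} with hSdef
  have hfin : S.Finite := by
    have : S = (fun σ : Equiv.Perm (Fin l) => dist A (σ • A)) '' {σ | σ ≠ 1} := by
      ext d; constructor
      · rintro ⟨σ, h1, h2⟩; exact ⟨σ, h1, h2.symm⟩
      · rintro ⟨σ, h1, h2⟩; exact ⟨σ, h1, h2.symm⟩
    rw [this]
    exact (Set.toFinite _).image _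
  have hne : S.Nonempty := by
    have h01 : (⟨0, by omega⟩ : Fin l) ≠ ⟨1, by omega⟩ := by
      simp [Fin.ext_iff]
    exact ⟨_, Equiv.swap ⟨0, by omega⟩ ⟨1, by omega⟩,
      mt Equiv.swap_eq_one_iff.mp h01, rfl⟩
  have hmem : alpha A ∈ S := hne.csInf_mem hfin
  obtain ⟨σ₀, hσ₀, heq⟩ := hmem
  obtain ⟨p, q, hpq, hle⟩ := part2 σ₀ hσ₀
  refine ⟨p, q, hpq, ?_⟩
  have hge : alpha A ≤ dist A (Equiv.swap p q • A) :=
    csInf_le hfin.bddBelow ⟨Equiv.swap p q, mt Equiv.swap_eq_one_iff.mp hpq, rfl⟩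
  have : dist A (Equiv.swap p q • A) ≤ alpha A := heq ▸ hle
  linarith

end
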